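/- Let X₁, …, Xₙ be independent real random variables satisfying E[Xᵢᵏ] ≤ k! S² R^(k-2) / 2 for all k ≥ 2 and some constants S, R > 0. Set X̃ᵢ = Xᵢ - E[Xᵢ]. Then for all t > 0, P[∑ᵢ X̃ᵢ ≥ t] ≤ exp(-t² / (2(n S² + R t))). -/

import Mathlib

open MeasureTheory ProbabilityTheory

lemma bern_hasSum_exp (x : ℝ) : HasSum (fun k : ℕ => x ^ k / k.factorial) (Real.exp x) := by
  rw [Real.exp_eq_exp_ℝ]
  exact NormedSpace.expSeries_div_hasSum_exp x

lemma bern_integrable_of_hasSum {α : Type*} [MeasurableSpace α] {μ : Measure α}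
    {f : ℕ → α → ℝ} {g : α → ℝ} (hg : AEStronglyMeasurable g μ)
    (hf : ∀ k, Integrable (f k) μ) (hsum : Summable fun k => ∫ a, ‖f k a‖ ∂μ)
    (hpt : ∀ a, HasSum (fun k => f k a) (g a)) : Integrable g μ := by
  refine ⟨hg, ?_⟩
  have key : ∑' k, ∫⁻ a, ‖f k a‖₊ ∂μ ≠ ⊤ := by
    have h1 : ∀ k : ℕ, ∫⁻ a, ‖f k a‖₊ ∂μ = ‖∫ a, ‖f k a‖ ∂μ‖₊ := by
      intro k
      rw [lintegral_coe_eq_integral _ (hf k).norm, ENNReal.coe_nnreal_eq, coe_nnnorm,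
        Real.norm_of_nonneg (integral_nonneg fun a => norm_nonneg (f k a))]
      simp only [coe_nnnorm]
    rw [funext h1, ← ENNReal.coe_tsum]
    · exact ENNReal.coe_ne_top
    · simp_rw [← NNReal.summable_coe, coe_nnnorm]
      exact hsum.abs
  have hmeas : ∀ k : ℕ, AEMeasurable (fun a => (‖f k a‖₊ : ENNReal)) μ := fun k =>
    (hf k).aestronglyMeasurable.enorm
  have hb : ∫⁻ a, ‖g a‖₊ ∂μ ≤ ∑' k, ∫⁻ a, ‖f k a‖₊ ∂μ := by
    rw [← lintegral_tsum hmeas]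
    refine lintegral_mono fun a => ?_
    rw [← (hpt a).tsum_eq]
    by_cases hsa : Summable fun k => ‖f k a‖₊
    · calc (‖∑' k, f k a‖₊ : ENNReal) ≤ ((∑' k, ‖f k a‖₊ : NNReal) : ENNReal) := by
            exact_mod_cast nnnorm_tsum_le hsa
        _ = ∑' k, (‖f k a‖₊ : ENNReal) := ENNReal.coe_tsum hsa
    · rw [ENNReal.tsum_coe_eq_top_iff_not_summable_coe.mpr]
      · exact le_top
      · exact fun h => hsa (NNReal.summable_coe.mp h)
  exact lt_of_le_of_lt hb key.lt_top

set_option maxHeartbeats 1000000 in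
lemma bern_mgf_bound {Ω : Type*} [MeasureSpace Ω] [IsProbabilityMeasure (ℙ : Measure Ω)]
    (Y : Ω → ℝ) (S R : ℝ) (hS : 0 < S) (hR : 0 < R)
    (hYmeas : Measurable Y)
    (hint : ∀ k : ℕ, Integrable (fun ω => Y ω ^ k) ℙ)
    (hmom : ∀ k : ℕ, 2 ≤ k →
      ∫ ω, Y ω ^ k ≤ (Nat.factorial k : ℝ) * S ^ 2 * R ^ (k - 2) / 2)
    (l : ℝ) (hl : 0 < l) (hlR : l * R < 1) :
    Integrable (fun ω => Real.exp (l * Y ω)) ℙ ∧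
      mgf Y ℙ l ≤ Real.exp (l * (∫ ω, Y ω) + S ^ 2 * l ^ 2 / (2 * (1 - l * R))) := by
  set r : ℝ := l * R with hr
  have hr0 : 0 ≤ r := by positivity
  have hr1 : r < 1 := hlR
  set f : ℕ → Ω → ℝ := fun k ω => (l * Y ω) ^ k / (k.factorial : ℝ) with hf
  have hfint : ∀ k, Integrable (f k) ℙ := by
    intro k
    have h1 : f k = fun ω => (l ^ k / (k.factorial : ℝ)) * Y ω ^ k := by
      funext ω; simp only [hf, mul_pow]; ring
    rw [h1]
    exact (hint k).const_mul _
  set μa : ℕ → ℝ := fun k => ∫ ω, |Y ω| ^ k with hμa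
  have hμa_int : ∀ k, Integrable (fun ω => |Y ω| ^ k) ℙ := by
    intro k
    simpa [abs_pow] using (hint k).abs
  have hμa_nonneg : ∀ k, 0 ≤ μa k :=
    fun k => integral_nonneg fun ω => by positivity
  set m : ℕ → ℝ := fun k => ∫ ω, Y ω ^ k with hm
  have habs_m : ∀ k, |m k| ≤ μa k := by
    intro k
    calc |m k| = ‖∫ ω, Y ω ^ k‖ := (Real.norm_eq_abs _).symm
      _ ≤ ∫ ω, ‖Y ω ^ k‖ := norm_integral_le_integral_norm _
      _ = μa k := by simp [hμa, Real.norm_eq_abs, abs_pow]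
  have hμ0 : μa 0 = 1 := by simp [hμa]
  have hμeven : ∀ k : ℕ, Even k → μa k = m k := by
    intro k hk
    simp only [hμa, hm]
    congr 1; funext ω; exact hk.pow_abs _
  have hodd : ∀ j : ℕ, μa (2*j+1) ≤ (μa (2*j) + μa (2*j+2))/2 := by
    intro j
    have hptw : ∀ ω, |Y ω| ^ (2*j+1) ≤ (|Y ω| ^ (2*j) + |Y ω| ^ (2*j+2))/2 := by
      intro ω
      set y := Y ω
      calc |y| ^ (2*j+1) = |y| ^ (2*j) * |y| := by rw [pow_succ]
        _ ≤ |y| ^ (2*j) * ((1 + |y|^2)/2) := by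
            refine mul_le_mul_of_nonneg_left ?_ (by positivity)
            nlinarith [sq_nonneg (|y| - 1)]
        _ = (|y| ^ (2*j) + |y| ^ (2*j+2))/2 := by ring
    have := integral_mono (hμa_int (2*j+1))
      (((hμa_int (2*j)).add (hμa_int (2*j+2))).div_const 2) hptw
    simpa [hμa, integral_add (hμa_int (2*j)) (hμa_int (2*j+2)), integral_div] using this
  -- even moment bound
  have heven_bd : ∀ i : ℕ, μa (2*i+2) ≤ ((2*i+2).factorial : ℝ) * S^2 * R^(2*i) / 2 := by
    intro i
    rw [hμeven _ ⟨i+1, by ring⟩]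
    have := hmom (2*i+2) (by omega)
    simpa [Nat.add_sub_cancel] using this
  -- norm integrals
  have hnorm : ∀ k : ℕ, (∫ ω, ‖f k ω‖ ∂ℙ) = l^k * μa k / (k.factorial : ℝ) := by
    intro k
    have h1 : (fun ω => ‖f k ω‖) = fun ω => (l^k / (k.factorial:ℝ)) * |Y ω|^k := by
      funext ω
      simp only [hf, Real.norm_eq_abs, abs_div, abs_pow, abs_mul, abs_of_pos hl, Nat.abs_cast]
      ring
    rw [h1, integral_const_mul]
    rw [div_mul_eq_mul_div]
  have hintegral_f : ∀ k : ℕ, (∫ ω, f k ω ∂ℙ) = l^k * m k / (k.factorial : ℝ) := by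
    intro k
    have h1 : f k = fun ω => (l^k / (k.factorial:ℝ)) * Y ω ^ k := by
      funext ω; simp only [hf, mul_pow]; ring
    rw [h1, integral_const_mul, div_mul_eq_mul_div]
  set K : ℝ := 1 + (1+S^2)/(4*R) + S^2/(2*R^2) + S^2/4*(1/R^3 + 1/R) with hK
  have hKa : (1:ℝ) ≤ K := by
    have h1 : (0:ℝ) ≤ (1+S^2)/(4*R) := by positivity
    have h2 : (0:ℝ) ≤ S^2/(2*R^2) := by positivity
    have h3 : (0:ℝ) ≤ S^2/4*(1/R^3 + 1/R) := by positivity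
    simp only [hK]; linarith
  have hK0 : (0:ℝ) ≤ K := le_trans zero_le_one hKa
  have hKb : S^2/(2*R^2) ≤ K := by
    have h1 : (0:ℝ) ≤ (1+S^2)/(4*R) := by positivity
    have h3 : (0:ℝ) ≤ S^2/4*(1/R^3 + 1/R) := by positivity
    simp only [hK]; linarith
  have hKc : (1+S^2)/(4*R) ≤ K := by
    have h2 : (0:ℝ) ≤ S^2/(2*R^2) := by positivity
    have h3 : (0:ℝ) ≤ S^2/4*(1/R^3 + 1/R) := by positivity
    simp only [hK]; linarith
  have hKd : S^2/4*(1/R^3 + 1/R) ≤ K := by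
    have h1 : (0:ℝ) ≤ (1+S^2)/(4*R) := by positivity
    have h2 : (0:ℝ) ≤ S^2/(2*R^2) := by positivity
    simp only [hK]; linarith
  have hbound : ∀ k : ℕ, l^k * μa k / (k.factorial:ℝ) ≤ K * (((k:ℝ)+1) * r^k) := by
    intro k
    have hrk : (0:ℝ) ≤ r^k := pow_nonneg hr0 k
    rcases Nat.even_or_odd k with he | ho
    · obtain ⟨j, hj⟩ := he
      rcases j with _ | i
      · have hk0 : k = 0 := by omega
        subst hk0
        simp only [pow_zero, Nat.factorial_zero, Nat.cast_one, div_one, one_mul, hμ0,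
          Nat.cast_zero, zero_add, mul_one]
        linarith
      · have hk0 : k = 2*i+2 := by omega
        subst hk0
        have h1 := heven_bd i
        have hfacpos : (0:ℝ) < ((2*i+2).factorial : ℝ) := by
          exact_mod_cast (2*i+2).factorial_pos
        have h2 : l^(2*i+2) * μa (2*i+2) / ((2*i+2).factorial:ℝ) ≤
            l^(2*i+2) * (((2*i+2).factorial:ℝ) * S^2 * R^(2*i)/2) / ((2*i+2).factorial:ℝ) := by
          gcongr
        refine h2.trans ?_
        have h3 : l^(2*i+2) * (((2*i+2).factorial:ℝ) * S^2 * R^(2*i)/2) / ((2*i+2).factorial:ℝ)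
            = S^2/(2*R^2) * r^(2*i+2) := by
          rw [hr, mul_pow]
          field_simp
          ring
        rw [h3]
        calc S^2/(2*R^2) * r^(2*i+2) ≤ K * r^(2*i+2) :=
              mul_le_mul_of_nonneg_right hKb (pow_nonneg hr0 _)
          _ = K * (1 * r^(2*i+2)) := by ring
          _ ≤ K * ((((2*i+2:ℕ):ℝ)+1) * r^(2*i+2)) := by
              gcongr
              push_cast
              linarith [Nat.cast_nonneg (α := ℝ) i]
    · obtain ⟨j, hj⟩ := ho
      rcases j with _ | i
      · have hk0 : k = 1 := by omega
        subst hk0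
        have h1 := hodd 0
        have h2 := heven_bd 0
        norm_num [hμ0] at h1 h2
        have hμ1 : μa 1 ≤ (1 + S^2)/2 := by
          refine h1.trans ?_
          linarith
        simp only [pow_one, Nat.factorial_one, Nat.cast_one, div_one]
        have e1 : (1+S^2)/(4*R) * ((1+1) * r) = l*(1+S^2)/2 := by
          rw [hr]; field_simp; ring
        calc l * μa 1 ≤ l * ((1+S^2)/2) := by
              exact mul_le_mul_of_nonneg_left hμ1 hl.le
          _ = (1+S^2)/(4*R) * ((1+1) * r) := by rw [e1]; ring
          _ ≤ K * ((1+1) * r) := by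
              have : (0:ℝ) ≤ (1+1) * r := by positivity
              exact mul_le_mul_of_nonneg_right hKc this
      · have hk0 : k = 2*i+3 := by omega
        subst hk0
        have h1 := hodd (i+1)
        rw [show 2*(i+1)+1 = 2*i+3 by ring, show 2*(i+1)+2 = 2*i+4 by ring,
          show 2*(i+1) = 2*i+2 by ring] at h1
        have h2 := heven_bd i
        have h3 := heven_bd (i+1)
        rw [show 2*(i+1)+2 = 2*i+4 by ring, show 2*(i+1) = 2*i+2 by ring] at h3
        have e4 : ((2*i+4).factorial : ℝ) = (2*(i:ℝ)+4) * ((2*i+3).factorial : ℝ) := by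
          rw [show 2*i+4 = (2*i+3)+1 by ring, Nat.factorial_succ]
          push_cast
          ring
        have hF3pos : (0:ℝ) < ((2*i+3).factorial : ℝ) := by
          exact_mod_cast (2*i+3).factorial_pos
        have hF23 : ((2*i+2).factorial:ℝ) ≤ ((2*i+3).factorial:ℝ) := by
          exact_mod_cast Nat.factorial_le (by omega)
        have hμk : μa (2*i+3) ≤
            ((2*i+3).factorial:ℝ) * (S^2/4) * (R^(2*i) + (2*(i:ℝ)+4) * R^(2*i+2)) := by
          have b2 : μa (2*i+2) ≤ ((2*i+3).factorial:ℝ) * S^2 * R^(2*i)/2 := by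
            refine h2.trans ?_
            gcongr
          have b3 : μa (2*i+4) ≤ (2*(i:ℝ)+4) * ((2*i+3).factorial:ℝ) * S^2 * R^(2*i+2)/2 := by
            refine h3.trans (le_of_eq ?_)
            rw [e4]
          calc μa (2*i+3) ≤ (μa (2*i+2) + μa (2*i+4))/2 := h1
            _ ≤ (((2*i+3).factorial:ℝ) * S^2 * R^(2*i)/2 +
                (2*(i:ℝ)+4) * ((2*i+3).factorial:ℝ) * S^2 * R^(2*i+2)/2)/2 := by linarith
            _ = ((2*i+3).factorial:ℝ) * (S^2/4) * (R^(2*i) + (2*(i:ℝ)+4) * R^(2*i+2)) := by ring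
        have hstep : l^(2*i+3) * μa (2*i+3) / ((2*i+3).factorial:ℝ) ≤
            l^(2*i+3) * (S^2/4) * (R^(2*i) + (2*(i:ℝ)+4) * R^(2*i+2)) := by
          rw [div_le_iff₀ hF3pos]
          calc l^(2*i+3) * μa (2*i+3)
              ≤ l^(2*i+3) * (((2*i+3).factorial:ℝ) * (S^2/4) * (R^(2*i) + (2*(i:ℝ)+4) * R^(2*i+2))) := by
                exact mul_le_mul_of_nonneg_left hμk (pow_nonneg hl.le _)
            _ = l^(2*i+3) * (S^2/4) * (R^(2*i) + (2*(i:ℝ)+4) * R^(2*i+2)) * ((2*i+3).factorial:ℝ) := by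
                ring
        refine hstep.trans ?_
        have hrpow : r^(2*i+3) = l^(2*i+3) * R^(2*i+3) := by rw [hr, mul_pow]
        have hcast : (((2*i+3:ℕ)):ℝ) + 1 = 2*(i:ℝ)+4 := by push_cast; ring
        rw [hcast, hrpow]
        calc l^(2*i+3) * (S^2/4) * (R^(2*i) + (2*(i:ℝ)+4) * R^(2*i+2))
            ≤ (S^2/4*(1/R^3+1/R)) * ((2*(i:ℝ)+4) * (l^(2*i+3) * R^(2*i+3))) := by
              have expand : (S^2/4*(1/R^3+1/R)) * ((2*(i:ℝ)+4) * (l^(2*i+3) * R^(2*i+3)))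
                  = l^(2*i+3) * (S^2/4) * ((2*(i:ℝ)+4) * R^(2*i) + (2*(i:ℝ)+4) * R^(2*i+2)) := by
                field_simp
                ring
              rw [expand]
              have hR2i : (0:ℝ) < R^(2*i) := pow_pos hR _
              have : R^(2*i) ≤ (2*(i:ℝ)+4) * R^(2*i) := by
                nlinarith [Nat.cast_nonneg (α := ℝ) i]
              have hmono : R^(2*i) + (2*(i:ℝ)+4) * R^(2*i+2) ≤
                  (2*(i:ℝ)+4) * R^(2*i) + (2*(i:ℝ)+4) * R^(2*i+2) := by linarith
              exact mul_le_mul_of_nonneg_left hmono (by positivity)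
          _ ≤ K * ((2*(i:ℝ)+4) * (l^(2*i+3) * R^(2*i+3))) := by
              have hpos : (0:ℝ) ≤ (2*(i:ℝ)+4) * (l^(2*i+3) * R^(2*i+3)) := by positivity
              exact mul_le_mul_of_nonneg_right hKd hpos
  have hsummaj : Summable (fun k : ℕ => K * (((k:ℝ)+1) * r^k)) := by
    have h1 : Summable (fun k : ℕ => ((k:ℝ))^1 * r^k) :=
      summable_pow_mul_geometric_of_norm_lt_one 1
        (by rwa [Real.norm_eq_abs, abs_of_nonneg hr0])
    have h2 : Summable (fun k : ℕ => r^k) := summable_geometric_of_lt_one hr0 hr1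
    have h3 := h1.add h2
    have h4 : (fun k : ℕ => ((k:ℝ))^1 * r^k + r^k) = fun k : ℕ => ((k:ℝ)+1) * r^k := by
      funext k; ring
    rw [h4] at h3
    exact h3.mul_left K
  have hsuma : Summable (fun k : ℕ => l^k * μa k / (k.factorial:ℝ)) := by
    refine Summable.of_nonneg_of_le (fun k => ?_) hbound hsummaj
    have := hμa_nonneg k
    positivity
  have hsumnorm : Summable (fun k : ℕ => ∫ ω, ‖f k ω‖ ∂ℙ) := by
    simp_rw [hnorm]; exact hsuma
  have hptsum : ∀ ω, HasSum (fun k => f k ω) (Real.exp (l * Y ω)) := fun ω =>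
    bern_hasSum_exp (l * Y ω)
  have hexp_meas : AEStronglyMeasurable (fun ω => Real.exp (l * Y ω)) ℙ :=
    (Real.measurable_exp.comp (measurable_const.mul hYmeas)).aestronglyMeasurable
  have hintexp : Integrable (fun ω => Real.exp (l * Y ω)) ℙ :=
    bern_integrable_of_hasSum hexp_meas hfint hsumnorm hptsum
  refine ⟨hintexp, ?_⟩
  set c : ℕ → ℝ := fun k => l^k * m k / (k.factorial:ℝ) with hc
  have hmgf_eq : mgf Y ℙ l = ∑' k, c k := by
    rw [mgf]
    have h1 : ∀ ω, Real.exp (l * Y ω) = ∑' k, f k ω := fun ω => (hptsum ω).tsum_eq.symm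
    calc ∫ ω, Real.exp (l * Y ω) ∂ℙ = ∫ ω, ∑' k, f k ω ∂ℙ :=
          integral_congr_ae (Filter.Eventually.of_forall h1)
      _ = ∑' k, ∫ ω, f k ω ∂ℙ :=
          (integral_tsum_of_summable_integral_norm hfint hsumnorm).symm
      _ = ∑' k, c k := by simp_rw [hintegral_f]; rfl
  have hsum_m : Summable c := by
    refine Summable.of_norm (Summable.of_nonneg_of_le (fun k => norm_nonneg _)
      (fun k => ?_) hsuma)
    simp only [hc, Real.norm_eq_abs, abs_div, abs_mul, abs_pow, abs_of_pos hl, Nat.abs_cast]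
    gcongr
    exact habs_m k
  have hm0 : m 0 = 1 := by simp [hm]
  have hc0 : c 0 = 1 := by simp [hc, hm0]
  have hc1 : c 1 = l * m 1 := by simp [hc]
  have hsum1 : Summable (fun k => c (k+1)) := (summable_nat_add_iff 1).mpr hsum_m
  have hsum2 : Summable (fun k => c (k+2)) := (summable_nat_add_iff 2).mpr hsum_m
  have hsplit : ∑' k, c k = c 0 + (c 1 + ∑' k, c (k+2)) := by
    rw [Summable.tsum_eq_zero_add hsum_m]
    congr 1
    rw [Summable.tsum_eq_zero_add hsum1]

  have htail : ∑' k, c (k+2) ≤ S^2*l^2/2 * (1-r)⁻¹ := by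
    have hterm : ∀ k : ℕ, c (k+2) ≤ S^2*l^2/2 * r^k := by
      intro k
      have h1 := hmom (k+2) (by omega)
      rw [Nat.add_sub_cancel] at h1
      have hfacpos : (0:ℝ) < ((k+2).factorial:ℝ) := by exact_mod_cast (k+2).factorial_pos
      have h2 : c (k+2) ≤ l^(k+2) * (((k+2).factorial:ℝ) * S^2 * R^k/2) / ((k+2).factorial:ℝ) := by
        simp only [hc]
        gcongr
      refine h2.trans (le_of_eq ?_)
      rw [hr]
      field_simp
      ring
    have hgs : Summable (fun k : ℕ => S^2*l^2/2 * r^k) :=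
      (summable_geometric_of_lt_one hr0 hr1).mul_left _
    calc ∑' k, c (k+2) ≤ ∑' k, S^2*l^2/2 * r^k := Summable.tsum_le_tsum hterm hsum2 hgs
      _ = S^2*l^2/2 * (1-r)⁻¹ := by
          rw [tsum_mul_left, tsum_geometric_of_lt_one hr0 hr1]
  have hrne : (1:ℝ) - r ≠ 0 := by linarith
  have htail' : ∑' k, c (k+2) ≤ S^2*l^2/(2*(1-r)) := by
    refine htail.trans (le_of_eq ?_)
    field_simp
  have hm1 : m 1 = ∫ ω, Y ω := by simp [hm]
  have hfinal : mgf Y ℙ l ≤ 1 + (l * m 1 + S^2*l^2/(2*(1-r))) := by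
    rw [hmgf_eq, hsplit, hc0, hc1]
    linarith
  calc mgf Y ℙ l ≤ 1 + (l * m 1 + S^2*l^2/(2*(1-r))) := hfinal
    _ ≤ Real.exp (l * m 1 + S^2*l^2/(2*(1-r))) := by
        have := Real.add_one_le_exp (l * m 1 + S^2*l^2/(2*(1-r)))
        linarith
    _ = Real.exp (l * (∫ ω, Y ω) + S^2*l^2/(2*(1-r))) := by rw [hm1]

set_option maxHeartbeats 1000000 in
theorem bernstein_one_tailed
    {Ω : Type*} [MeasureSpace Ω] [IsProbabilityMeasure (ℙ : Measure Ω)]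
    {n : ℕ} (X : Fin n → Ω → ℝ) (S R : ℝ) (hS : 0 < S) (hR : 0 < R)
    (hmeas : ∀ i, Measurable (X i))
    (hindep : iIndepFun X ℙ)
    (hint : ∀ i (k : ℕ), Integrable (fun ω => X i ω ^ k) ℙ)
    (hmom : ∀ i (k : ℕ), 2 ≤ k →
      ∫ ω, X i ω ^ k ≤ (Nat.factorial k : ℝ) * S ^ 2 * R ^ (k - 2) / 2)
    (t : ℝ) (ht : 0 < t) :
    (ℙ {ω | t ≤ ∑ i, (X i ω - ∫ ω', X i ω')}).toReal ≤
      Real.exp (-t ^ 2 / (2 * (n * S ^ 2 + R * t))) := by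
  rcases Nat.eq_zero_or_pos n with hn | hn
  · subst hn
    have hset : {ω : Ω | t ≤ ∑ i : Fin 0, (X i ω - ∫ ω', X i ω')} = ∅ := by
      ext ω
      simp [ht.not_ge]
    rw [hset]
    simp only [measure_empty, ENNReal.toReal_zero]
    positivity
  · have hnR : (0:ℝ) < (n:ℝ) := by exact_mod_cast hn
    set D : ℝ := n * S^2 + R * t with hD
    have hD0 : 0 < D := by
      have h1 : (0:ℝ) < (n:ℝ) * S^2 := by positivity
      have h2 : (0:ℝ) < R * t := mul_pos hR ht
      rw [hD]; linarith
    set l : ℝ := t / D with hl_def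
    have hl : 0 < l := div_pos ht hD0
    have hlR : l * R < 1 := by
      rw [hl_def, div_mul_eq_mul_div, div_lt_one hD0, hD]
      nlinarith [mul_pos hnR (pow_pos hS 2)]
    have hb : ∀ i, Integrable (fun ω => Real.exp (l * X i ω)) ℙ ∧
        mgf (X i) ℙ l ≤ Real.exp (l * (∫ ω, X i ω) + S^2*l^2/(2*(1-l*R))) := fun i =>
      bern_mgf_bound (X i) S R hS hR (hmeas i) (hint i) (hmom i) l hl hlR
    set c : ℝ := S^2*l^2/(2*(1-l*R)) with hc
    set M : ℝ := ∑ i, ∫ ω, X i ω with hM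
    set Z : Ω → ℝ := fun ω => ∑ i, (X i ω - ∫ ω', X i ω') with hZ
    have hZ' : ∀ ω, Z ω = (∑ i, X i ω) - M := by
      intro ω
      simp only [hZ, hM, Finset.sum_sub_distrib]
    have hsum_int : Integrable (fun ω => Real.exp (l * (∑ i, X i) ω)) ℙ :=
      hindep.integrable_exp_mul_sum hmeas (fun i _ => (hb i).1)
    have hZint : Integrable (fun ω => Real.exp (l * Z ω)) ℙ := by
      have h1 : (fun ω => Real.exp (l * Z ω)) =
          fun ω => Real.exp (-(l*M)) * Real.exp (l * (∑ i, X i) ω) := by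
        funext ω
        rw [← Real.exp_add, hZ' ω, Finset.sum_apply]
        ring_nf
      rw [h1]
      exact hsum_int.const_mul _
    have hch := measure_ge_le_exp_mul_mgf (μ := ℙ) (X := Z) t hl.le hZint
    have hsetZ : {ω : Ω | t ≤ ∑ i, (X i ω - ∫ ω', X i ω')} = {ω : Ω | t ≤ Z ω} := rfl
    rw [hsetZ]
    refine hch.trans ?_
    have hmgfZ : mgf Z ℙ l = Real.exp (-(l*M)) * mgf (∑ i, X i) ℙ l := by
      rw [mgf, mgf, ← integral_const_mul]
      refine integral_congr_ae (Filter.Eventually.of_forall fun ω => ?_)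
      dsimp only
      rw [← Real.exp_add, hZ' ω, Finset.sum_apply]
      ring_nf
    have hmgfsum : mgf (∑ i, X i) ℙ l = ∏ i, mgf (X i) ℙ l :=
      hindep.mgf_sum hmeas Finset.univ
    have hprod : ∏ i, mgf (X i) ℙ l ≤ ∏ i, Real.exp (l * (∫ ω, X i ω) + c) :=
      Finset.prod_le_prod (fun i _ => mgf_nonneg) (fun i _ => (hb i).2)
    have hprodexp : ∏ i, Real.exp (l * (∫ ω, X i ω) + c) = Real.exp (l * M + n * c) := by
      rw [← Real.exp_sum]
      congr 1
      rw [Finset.sum_add_distrib, ← Finset.mul_sum, Finset.sum_const, Finset.card_univ,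
        Fintype.card_fin, nsmul_eq_mul]
    have hchain : Real.exp (-l * t) * mgf Z ℙ l ≤ Real.exp (-l*t + n*c) := by
      rw [hmgfZ, hmgfsum]
      calc Real.exp (-l * t) * (Real.exp (-(l*M)) * ∏ i, mgf (X i) ℙ l)
          ≤ Real.exp (-l * t) * (Real.exp (-(l*M)) * ∏ i, Real.exp (l * (∫ ω, X i ω) + c)) := by
            have h0 : (0:ℝ) ≤ Real.exp (-l*t) * Real.exp (-(l*M)) := by positivity
            rw [← mul_assoc, ← mul_assoc]
            exact mul_le_mul_of_nonneg_left hprod (by positivity)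
        _ = Real.exp (-l*t + n*c) := by
            rw [hprodexp, ← Real.exp_add, ← Real.exp_add]
            ring_nf
    refine hchain.trans (le_of_eq ?_)
    congr 1
    rw [hc]
    have h1 : 1 - l*R = (n:ℝ)*S^2/D := by
      rw [hl_def, hD]
      field_simp
      ring
    rw [h1, hl_def, hD]
    have hne : (n:ℝ)*S^2 ≠ 0 := by positivity
    field_simp
    ring
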